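/- If z ∈ S_α^m is an extreme point different from every standard basis vector e^k, then every coordinate z_i with Re(z_i) ∈ (0,1) satisfies |arg(z_i)| = α₀. -/

import Mathlib

noncomputable def payoff {m n : ℕ} (A : Matrix (Fin m) (Fin n) ℂ)
    (z : Fin m → ℂ) (w : Fin n → ℂ) : ℝ :=
  (∑ i, ∑ j, (starRingEnd ℂ) (z i) * A i j * w j).re

def Sarg (m : ℕ) (α : ℝ) : Set (Fin m → ℂ) :=
  {z | (∀ i, 0 ≤ (z i).re ∧ |(z i).im| ≤ Real.tan α * (z i).re) ∧ ∑ i, z i = 1}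


/-- A nontrivial extreme point of S_α^m has all coordinates with real part in (0,1)
on the boundary of the argument cone: |arg z_i| = α₀. -/
theorem extreme_point_boundary_argument (m : ℕ) (α₀ : ℝ)
    (hα : α₀ ∈ Set.Ioo 0 (Real.pi / 2))
    (z : Fin m → ℂ) (hz : z ∈ Set.extremePoints ℝ (Sarg m α₀))
    (hne : ∀ k : Fin m, z ≠ fun j => if j = k then (1 : ℂ) else 0)
    (i : Fin m) (hre : (z i).re ∈ Set.Ioo (0 : ℝ) 1) :
    |(z i).im| = Real.tan α₀ * (z i).re := by
  obtain ⟨⟨hcone, hsum⟩, hext⟩ := hz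
  by_contra hne'
  have hlt : |(z i).im| < Real.tan α₀ * (z i).re :=
    lt_of_le_of_ne ((hcone i).2) hne'
  have htan : 0 < Real.tan α₀ := Real.tan_pos_of_pos_of_lt_pi_div_two hα.1 hα.2
  have hre_sum : ∑ k, (z k).re = 1 := by
    have h := congrArg Complex.re hsum
    simpa using h
  -- find another coordinate with positive real part
  have hj : ∃ j, j ≠ i ∧ 0 < (z j).re := by
    by_contra h
    push_neg at h
    have hz0 : ∀ k, k ≠ i → (z k).re = 0 := fun k hk => le_antisymm (h k hk) (hcone k).1
    have : ∑ k, (z k).re = (z i).re := by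
      rw [Finset.sum_eq_single i]
      · intro b _ hb; exact hz0 b hb
      · intro hi; exact absurd (Finset.mem_univ i) hi
    rw [this] at hre_sum
    linarith [hre.2]
  obtain ⟨j, hji, hjre⟩ := hj
  have hij : i ≠ j := hji.symm
  set C : ℝ := |(z j).im| + Real.tan α₀ * (z j).re + (z j).re with hCdef
  have hC0 : 0 < C := by
    have := abs_nonneg (z j).im
    nlinarith
  set δ : ℝ := Real.tan α₀ * (z i).re - |(z i).im| with hδdef
  have hδ0 : 0 < δ := by simp [hδdef]; linarith
  set t : ℝ := min (min (δ / C) ((z i).re / C)) 1 with htdef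
  have ht0 : 0 < t :=
    lt_min (lt_min (div_pos hδ0 hC0) (div_pos hre.1 hC0)) one_pos
  have ht1 : t ≤ 1 := min_le_right _ _
  have htδ : t * C ≤ δ := by
    have h1 : t ≤ δ / C := le_trans (min_le_left _ _) (min_le_left _ _)
    exact (le_div_iff₀ hC0).mp h1
  have htre : t * C ≤ (z i).re := by
    have h1 : t ≤ (z i).re / C := le_trans (min_le_left _ _) (min_le_right _ _)
    exact (le_div_iff₀ hC0).mp h1
  clear_value C δ t
  -- the perturbation direction
  set v : Fin m → ℂ := fun k => (if k = i then z j else 0) + (if k = j then -(z j) else 0)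
    with hvdef
  have hvsum : ∑ k, v k = 0 := by
    simp [hvdef, Finset.sum_add_distrib]
  have hvi : v i = z j := by simp [hvdef, hij]
  have hvj : v j = -(z j) := by simp [hvdef, hji]
  have hvk : ∀ k, k ≠ i → k ≠ j → v k = 0 := by
    intro k h1 h2; simp [hvdef, h1, h2]
  -- membership of the perturbed points
  have hmem : ∀ s : ℝ, |s| ≤ t → (fun k => z k + (s : ℂ) * v k) ∈ Sarg m α₀ := by
    intro s hs
    obtain ⟨hs1, hs2⟩ := abs_le.mp hs
    constructor
    · intro k
      beta_reduce
      by_cases hk : k = i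
      · rw [hk, hvi]
        simp only [Complex.add_re, Complex.add_im, Complex.re_ofReal_mul,
          Complex.im_ofReal_mul]
        have h2 : |s * (z j).re| ≤ t * (z j).re := by
          rw [abs_mul, abs_of_nonneg (hcone j).1]
          exact mul_le_mul_of_nonneg_right hs (hcone j).1
        obtain ⟨h2a, h2b⟩ := abs_le.mp h2
        have h1 : |s * (z j).im| ≤ t * |(z j).im| := by
          rw [abs_mul]
          exact mul_le_mul_of_nonneg_right hs (abs_nonneg _)
        obtain ⟨h1a, h1b⟩ := abs_le.mp h1
        have h3 : |s * (Real.tan α₀ * (z j).re)| ≤ t * (Real.tan α₀ * (z j).re) := by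
          rw [abs_mul, abs_of_nonneg (by positivity : (0:ℝ) ≤ Real.tan α₀ * (z j).re)]
          exact mul_le_mul_of_nonneg_right hs (by positivity)
        obtain ⟨h3a, h3b⟩ := abs_le.mp h3
        have hCmul : t * (|(z j).im| + Real.tan α₀ * (z j).re) ≤ t * C := by
          apply mul_le_mul_of_nonneg_left _ ht0.le
          simp [hCdef]; exact (hcone j).1
        have hreC : t * (z j).re ≤ t * C := by
          apply mul_le_mul_of_nonneg_left _ ht0.le
          simp [hCdef]
          nlinarith [abs_nonneg (z j).im]
        have him1 := le_abs_self (z i).im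
        have him2 := neg_abs_le (z i).im
        have hδeq : δ = Real.tan α₀ * (z i).re - |(z i).im| := hδdef
        rw [hδeq] at htδ
        constructor
        · linarith
        · rw [abs_le]
          constructor
          · linarith
          · linarith
      · by_cases hk2 : k = j
        · rw [hk2, hvj]
          simp only [Complex.add_re, Complex.add_im, Complex.re_ofReal_mul,
            Complex.im_ofReal_mul, Complex.neg_re, Complex.neg_im]
          have h1s : 0 ≤ 1 - s := by linarith
          have hmul := mul_le_mul_of_nonneg_left (hcone j).2 h1s
          have hp1 := mul_nonneg h1s (sub_nonneg.mpr (le_abs_self (z j).im))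
          have hp2 := mul_nonneg h1s (sub_nonneg.mpr (neg_abs_le (z j).im))
          have hp3 := mul_nonneg h1s (hcone j).1
          constructor
          · nlinarith
          · rw [abs_le]
            constructor
            · nlinarith
            · nlinarith
        · rw [hvk k hk hk2]
          simpa using hcone k
    · have : ∑ k, (z k + (s : ℂ) * v k) = ∑ k, z k + (s : ℂ) * ∑ k, v k := by
        rw [Finset.sum_add_distrib, Finset.mul_sum]
      rw [this, hvsum, hsum]
      ring
  -- the two perturbed points
  set x : Fin m → ℂ := fun k => z k + (t : ℂ) * v k with hxdef
  set y : Fin m → ℂ := fun k => z k + ((-t : ℝ) : ℂ) * v k with hydef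
  have hx : x ∈ Sarg m α₀ := hmem t (by rw [abs_of_pos ht0])
  have hy : y ∈ Sarg m α₀ := hmem (-t) (by rw [abs_neg, abs_of_pos ht0])
  have hseg : z ∈ openSegment ℝ x y := by
    refine ⟨1/2, 1/2, by norm_num, by norm_num, by norm_num, ?_⟩
    funext k
    simp only [hxdef, hydef, Pi.add_apply, Pi.smul_apply, Complex.real_smul]
    push_cast
    ring
  have hxz := hext hx hy hseg
  have : x j = z j := congrFun hxz j
  rw [hxdef] at this
  simp only [hvj] at this
  have htz : (t : ℂ) * z j = 0 := by
    have := this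
    ring_nf at this ⊢
    linear_combination -this
  have hzj : z j ≠ 0 := by
    intro h; rw [h] at hjre; simp at hjre
  have : (t : ℂ) = 0 := by
    rcases mul_eq_zero.mp htz with h | h
    · exact h
    · exact absurd h hzj
  rw [Complex.ofReal_eq_zero] at this
  linarith
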